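/- Suppose b = 1, ε, a, ω₀, τ₀ are real with ω₀ ≠ 0, τ₀ ≠ 0 and Δ(iω₀, τ₀) = 0. Then the bilinear pairing of the constant row vector ψ₂ = (ε + a, −1) with φ₁(θ) = (1, iω₀)ᵀ·exp(iω₀τ₀θ) vanishes: (ε + a, −1)·(1, iω₀)ᵀ + ∫₋₁⁰ (ε + a, −1)·𝔹·(1, iω₀)ᵀ·exp(iω₀τ₀ξ) dξ = 0. -/

import Mathlib

open Complex Matrix

/-- The characteristic function Δ(λ, τ) = λ² − ελ + 1 − (aλ + b)·exp(−λτ) of the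
linearized van der Pol equation with delayed feedback. -/
noncomputable def charFn (ε a b τ : ℝ) (lam : ℂ) : ℂ :=
  lam ^ 2 - (ε : ℂ) * lam + 1 - ((a : ℂ) * lam + (b : ℂ)) * Complex.exp (-lam * (τ : ℂ))

/-- The delay coefficient matrix 𝔹 = [[0, 0], [τ₀, aτ₀]] of the time-rescaled
linearized delayed van der Pol system. -/
noncomputable def Bmat (a τ₀ : ℝ) : Matrix (Fin 2) (Fin 2) ℂ :=
  !![0, 0; (τ₀ : ℂ), (a : ℂ) * (τ₀ : ℂ)]

/-- For b = 1, ω₀ ≠ 0, τ₀ ≠ 0 and Δ(iω₀, τ₀) = 0, the bilinear pairing of the constant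
row vector ψ₂ = (ε + a, −1) with φ₁(θ) = (1, iω₀)ᵀ·exp(iω₀τ₀θ) vanishes. -/
theorem pairing_psi2_phi1_eq_zero (ε a ω₀ τ₀ : ℝ) (hω : ω₀ ≠ 0) (hτ : τ₀ ≠ 0)
    (h : charFn ε a 1 τ₀ (Complex.I * (ω₀ : ℂ)) = 0) :
    (![(ε : ℂ) + (a : ℂ), -1] ⬝ᵥ ![1, Complex.I * (ω₀ : ℂ)])
      + (∫ ξ in (-1 : ℝ)..0,
          (Matrix.vecMul ![(ε : ℂ) + (a : ℂ), -1] (Bmat a τ₀) ⬝ᵥ ![1, Complex.I * (ω₀ : ℂ)])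
            * Complex.exp (Complex.I * (ω₀ : ℂ) * (τ₀ : ℂ) * (ξ : ℂ))) = 0 := by
  have hc : Complex.I * (ω₀ : ℂ) * (τ₀ : ℂ) ≠ 0 := by
    simp [Complex.I_ne_zero, Complex.ofReal_ne_zero, hω, hτ]
  have hint : (∫ ξ in (-1 : ℝ)..0,
      (Matrix.vecMul ![(ε : ℂ) + (a : ℂ), -1] (Bmat a τ₀) ⬝ᵥ ![1, Complex.I * (ω₀ : ℂ)])
        * Complex.exp (Complex.I * (ω₀ : ℂ) * (τ₀ : ℂ) * (ξ : ℂ)))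
      = (Matrix.vecMul ![(ε : ℂ) + (a : ℂ), -1] (Bmat a τ₀) ⬝ᵥ ![1, Complex.I * (ω₀ : ℂ)])
        * ((Complex.exp (Complex.I * (ω₀ : ℂ) * (τ₀ : ℂ) * ((0:ℝ):ℂ))
            - Complex.exp (Complex.I * (ω₀ : ℂ) * (τ₀ : ℂ) * ((-1:ℝ):ℂ))) /
          (Complex.I * (ω₀ : ℂ) * (τ₀ : ℂ))) := by
    rw [intervalIntegral.integral_const_mul, integral_exp_mul_complex hc]
  rw [hint]
  simp only [Bmat, Matrix.vecMul, dotProduct, Fin.sum_univ_two,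
    Matrix.cons_val', Matrix.cons_val_zero, Matrix.cons_val_one, Matrix.head_cons,
    Matrix.cons_val_fin_one, Matrix.empty_val', Matrix.head_fin_const,
    Matrix.of_apply, Complex.ofReal_zero, Complex.ofReal_neg, Complex.ofReal_one,
    mul_zero, Complex.exp_zero]
  simp only [charFn] at h
  have hE : Complex.I * (ω₀ : ℂ) * (τ₀ : ℂ) * (-1 : ℂ)
      = -(Complex.I * (ω₀ : ℂ) * (τ₀ : ℂ)) := by ring
  have hE2 : -(Complex.I * (ω₀ : ℂ)) * (τ₀ : ℂ)
      = -(Complex.I * (ω₀ : ℂ) * (τ₀ : ℂ)) := by ring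
  rw [hE]
  rw [hE2] at h
  have hω1 : (ω₀:ℂ) ≠ 0 := Complex.ofReal_ne_zero.mpr hω
  have hτ1 : (τ₀:ℂ) ≠ 0 := Complex.ofReal_ne_zero.mpr hτ
  field_simp
  push_cast at h ⊢
  linear_combination (-(τ₀:ℂ)) * h
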